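/- Let p be a prime with p ≡ 1 (mod 3), and let L, M be integers with 4p = L² + 27M². If q is a prime with q ∉ {2, 3, p} and q divides M, then q is a cubic residue modulo p. -/

import Mathlib

open Finset Polynomial


lemma cubic_repr_unique (p L M C D : ℤ) (hp : Prime p)
    (h1 : 4 * p = L ^ 2 + 27 * M ^ 2) (h2 : 4 * p = C ^ 2 + 27 * D ^ 2) :
    M ^ 2 = D ^ 2 := by
  have h4 : (L * D - M * C) * (L * D + M * C) = p * (4 * (D ^ 2 - M ^ 2)) := by
    linear_combination M ^ 2 * h2 - D ^ 2 * h1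
  have hdvd : p ∣ (L * D - M * C) * (L * D + M * C) := ⟨_, h4⟩
  have h1p : 1 ≤ p ^ 2 := by nlinarith [Int.one_le_abs hp.ne_zero, sq_abs p, abs_nonneg p]
  have hkey : L ^ 2 * D ^ 2 = M ^ 2 * C ^ 2 := by
    rcases hp.2.2 _ _ hdvd with h | h
    · obtain ⟨t, ht⟩ := h
      have h16 : 16 * p ^ 2 = (L * C + 27 * M * D) ^ 2 + 27 * (L * D - M * C) ^ 2 := by
        linear_combination (C ^ 2 + 27 * D ^ 2) * h1 + 4 * p * h2
      rw [ht] at h16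
      have ht0 : t = 0 := by
        by_contra h0
        have h1t : 1 ≤ t ^ 2 := by nlinarith [Int.one_le_abs h0, sq_abs t, abs_nonneg t]
        nlinarith [sq_nonneg (L * C + 27 * M * D),
          mul_le_mul_of_nonneg_left h1t (by positivity : (0:ℤ) ≤ p ^ 2)]
      have hLD : L * D - M * C = 0 := by rw [ht, ht0, mul_zero]
      linear_combination (L * D + M * C) * hLD
    · obtain ⟨t, ht⟩ := h
      have h16 : 16 * p ^ 2 = (L * C - 27 * M * D) ^ 2 + 27 * (L * D + M * C) ^ 2 := by
        linear_combination (C ^ 2 + 27 * D ^ 2) * h1 + 4 * p * h2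
      rw [ht] at h16
      have ht0 : t = 0 := by
        by_contra h0
        have h1t : 1 ≤ t ^ 2 := by nlinarith [Int.one_le_abs h0, sq_abs t, abs_nonneg t]
        nlinarith [sq_nonneg (L * C - 27 * M * D),
          mul_le_mul_of_nonneg_left h1t (by positivity : (0:ℤ) ≤ p ^ 2)]
      have hLD : L * D + M * C = 0 := by rw [ht, ht0, mul_zero]
      linear_combination (L * D - M * C) * hLD
  have hp0 : (4 : ℤ) * p ≠ 0 := by simp [hp.ne_zero]
  have hfin : 4 * p * M ^ 2 = 4 * p * D ^ 2 := by
    linear_combination M ^ 2 * h2 - D ^ 2 * h1 - hkey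
  exact mul_left_cancel₀ hp0 hfin


lemma monic_quad : (X ^ 2 + X + 1 : ℤ[X]).Monic := by
  have : (X ^ 2 + X + 1 : ℤ[X]) = X ^ 2 + (X + 1) := by ring
  rw [this]
  apply Polynomial.monic_X_pow_add
  apply lt_of_le_of_lt (Polynomial.degree_add_le _ _)
  rw [Polynomial.degree_X]
  exact max_lt (by norm_num) (lt_of_le_of_lt Polynomial.degree_one_le (by norm_num))

lemma degree_quad : (X ^ 2 + X + 1 : ℤ[X]).degree = 2 := by
  compute_degree!

/-- Evaluating an integer polynomial at a root of `X² + X + 1` only depends on the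
residue mod `X² + X + 1`. -/
lemma aeval_eq_of_quad_root {R : Type*} [CommRing R] (P : ℤ[X]) {x : R}
    (hx : x ^ 2 + x + 1 = 0) :
    aeval x P = ((P %ₘ (X ^ 2 + X + 1)).coeff 0 : R)
      + ((P %ₘ (X ^ 2 + X + 1)).coeff 1 : R) * x := by
  have hdeg : (P %ₘ (X ^ 2 + X + 1)).degree ≤ 1 := by
    have h := Polynomial.degree_modByMonic_lt P monic_quad
    rw [degree_quad] at h
    rcases hd : (P %ₘ (X ^ 2 + X + 1)).degree with _ | n
    · exact bot_le
    · rw [hd] at h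
      have hn : n < 2 := by exact_mod_cast (show (n : WithBot ℕ) < 2 from h)
      show (n : WithBot ℕ) ≤ 1
      exact_mod_cast Nat.lt_succ_iff.mp hn
  conv_lhs => rw [← Polynomial.modByMonic_add_div P (X ^ 2 + X + 1)]
  rw [map_add, map_mul]
  have hzero : (aeval x) (X ^ 2 + X + 1 : ℤ[X]) = 0 := by
    simpa using hx
  rw [hzero, zero_mul, add_zero]
  conv_lhs => rw [Polynomial.eq_X_add_C_of_degree_le_one hdeg]
  simp [mul_comm, add_comm]


section QuadRootHelpers

variable {K : Type*} [Field K] {x : K}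

lemma quad_root_cube (hx : x ^ 2 + x + 1 = 0) : x ^ 3 = 1 := by
  linear_combination (x - 1) * hx

lemma quad_root_ne_one (hx : x ^ 2 + x + 1 = 0) (h3 : (3 : K) ≠ 0) : x ≠ 1 := by
  intro h
  rw [h] at hx
  exact h3 (by linear_combination hx)

lemma quad_root_ne_zero (hx : x ^ 2 + x + 1 = 0) : x ≠ 0 := by
  intro h
  rw [h] at hx
  simp at hx

lemma quad_root_isPrimitiveRoot (hx : x ^ 2 + x + 1 = 0) (h3 : (3 : K) ≠ 0) :
    IsPrimitiveRoot x 3 := by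
  have hx3 := quad_root_cube hx
  have hx1 := quad_root_ne_one hx h3
  have hx2 : x ^ 2 ≠ 1 := by
    intro h
    apply hx1
    have : x ^ 3 = x := by rw [pow_succ, h, one_mul]
    rw [hx3] at this
    exact this.symm
  refine ⟨hx3, fun l hl => ?_⟩
  have hl3 : x ^ (l % 3) = 1 := by rw [← pow_eq_pow_mod l hx3]; exact hl
  have h0 : l % 3 = 0 := by
    by_contra hne
    have : l % 3 = 1 ∨ l % 3 = 2 := by omega
    rcases this with h | h <;> rw [h] at hl3
    · rw [pow_one] at hl3; exact hx1 hl3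
    · exact hx2 hl3
  exact Nat.dvd_of_mod_eq_zero h0

/-- The unit given by a root of `X² + X + 1`. -/
def quadRootUnit (hx : x ^ 2 + x + 1 = 0) : Kˣ :=
  ⟨x, x ^ 2, by rw [← pow_succ']; exact quad_root_cube hx,
    by rw [← pow_succ]; exact quad_root_cube hx⟩

lemma quadRootUnit_val (hx : x ^ 2 + x + 1 = 0) : ((quadRootUnit hx : Kˣ) : K) = x := rfl

lemma quadRootUnit_pow_three (hx : x ^ 2 + x + 1 = 0) : (quadRootUnit hx) ^ 3 = 1 := by
  apply Units.ext
  rw [Units.val_pow_eq_pow_val, quadRootUnit_val, quad_root_cube hx, Units.val_one]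

end QuadRootHelpers

lemma complex_omega_indep {ω : ℂ} (hω : ω ^ 2 + ω + 1 = 0) {m n : ℤ}
    (h : (m : ℂ) + n * ω = 0) : m = 0 ∧ n = 0 := by
  by_cases hn : n = 0
  · refine ⟨?_, hn⟩
    rw [hn] at h
    have : (m : ℂ) = 0 := by simpa using h
    exact_mod_cast this
  · exfalso
    have hnC : (n : ℂ) ≠ 0 := Int.cast_ne_zero.mpr hn
    set r : ℝ := (-m : ℝ) / (n : ℝ) with hr_def
    have hω' : ω = ((r : ℝ) : ℂ) := by
      have h1 : ((r : ℝ) : ℂ) = (-m : ℂ) / (n : ℂ) := by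
        rw [hr_def]; push_cast; ring
      rw [h1, eq_div_iff hnC]
      linear_combination h
    have hC : ((r : ℝ) : ℂ) ^ 2 + ((r : ℝ) : ℂ) + 1 = 0 := by rw [← hω']; exact hω
    have hR : ((r ^ 2 + r + 1 : ℝ) : ℂ) = 0 := by push_cast; linear_combination hC
    have hr : r ^ 2 + r + 1 = 0 := by exact_mod_cast hR
    nlinarith [sq_nonneg (2 * r + 1)]

lemma complex_omega_indep' {ω : ℂ} (hω : ω ^ 2 + ω + 1 = 0) {m n m' n' : ℤ}
    (h : (m : ℂ) + n * ω = (m' : ℂ) + n' * ω) : m = m' ∧ n = n' := by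
  have h0 : ((m - m' : ℤ) : ℂ) + ((n - n' : ℤ) : ℂ) * ω = 0 := by
    push_cast
    linear_combination h
  have := complex_omega_indep hω h0
  omega


noncomputable section CubicResAux

variable (p : ℕ) [Fact p.Prime]

/-- A fixed generator of `(ZMod p)ˣ`. -/
def cubicGen : (ZMod p)ˣ :=
  (IsCyclic.exists_monoid_generator (α := (ZMod p)ˣ)).choose

lemma cubicGen_spec (x : (ZMod p)ˣ) : ∃ k : ℕ, cubicGen p ^ k = x := by
  have h := (IsCyclic.exists_monoid_generator (α := (ZMod p)ˣ)).choose_spec x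
  rwa [Submonoid.mem_powers_iff] at h

/-- A discrete logarithm with respect to `cubicGen p`. -/
def cubicDlog (x : (ZMod p)ˣ) : ℕ := (cubicGen_spec p x).choose

lemma cubicDlog_spec (x : (ZMod p)ˣ) : cubicGen p ^ cubicDlog p x = x :=
  (cubicGen_spec p x).choose_spec

lemma orderOf_cubicGen : orderOf (cubicGen p) = p - 1 := by
  have hmem : ∀ x : (ZMod p)ˣ, x ∈ Subgroup.zpowers (cubicGen p) := by
    intro x
    obtain ⟨k, hk⟩ := cubicGen_spec p x
    exact ⟨(k : ℤ), by exact_mod_cast hk⟩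
  rw [orderOf_eq_card_of_forall_mem_zpowers hmem, Nat.card_eq_fintype_card,
    ZMod.card_units_eq_totient, Nat.totient_prime Fact.out]

variable {R : Type*} [CommRing R]

set_option linter.unusedSectionVars false

lemma cubic_pow_dlog_congr (ω : Rˣ) (hω : ω ^ (p - 1) = 1) {k m : ℕ}
    (h : k ≡ m [MOD p - 1]) : ω ^ k = ω ^ m := by
  rw [pow_eq_pow_mod k hω, pow_eq_pow_mod m hω, h]

/-- The homomorphism `(ZMod p)ˣ →* Rˣ` sending `cubicGen p ^ k` to `ω ^ k`. -/
def cubicHom (ω : Rˣ) (hω : ω ^ (p - 1) = 1) : (ZMod p)ˣ →* Rˣ where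
  toFun x := ω ^ cubicDlog p x
  map_one' := by
    have h : cubicGen p ^ cubicDlog p 1 = cubicGen p ^ 0 := by
      rw [cubicDlog_spec, pow_zero]
    rw [pow_eq_pow_iff_modEq, orderOf_cubicGen] at h
    show ω ^ cubicDlog p 1 = 1
    rw [cubic_pow_dlog_congr p ω hω h, pow_zero]
  map_mul' x y := by
    have h : cubicGen p ^ cubicDlog p (x * y)
        = cubicGen p ^ (cubicDlog p x + cubicDlog p y) := by
      rw [cubicDlog_spec, pow_add, cubicDlog_spec, cubicDlog_spec]
    rw [pow_eq_pow_iff_modEq, orderOf_cubicGen] at h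
    show ω ^ cubicDlog p (x * y) = ω ^ cubicDlog p x * ω ^ cubicDlog p y
    rw [cubic_pow_dlog_congr p ω hω h, pow_add]

/-- The multiplicative character on `ZMod p` sending `cubicGen p ^ k` to `ω ^ k`. -/
def cubicChar (ω : Rˣ) (hω : ω ^ (p - 1) = 1) : MulChar (ZMod p) R :=
  MulChar.ofUnitHom (cubicHom p ω hω)

lemma cubicChar_coe (ω : Rˣ) (hω : ω ^ (p - 1) = 1) (u : (ZMod p)ˣ) :
    cubicChar p ω hω (u : ZMod p) = ((ω ^ cubicDlog p u : Rˣ) : R) :=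
  MulChar.ofUnitHom_coe _ _

/-- The exponent function used to express Jacobi sums as integer polynomials in `ω`. -/
def cubicExp (x : ZMod p) : ℕ :=
  if h : x = 0 then 0 else cubicDlog p (Units.mk0 x h)

lemma cubicChar_apply (ω : Rˣ) (hω : ω ^ (p - 1) = 1) {x : ZMod p} (hx : x ≠ 0) :
    cubicChar p ω hω x = (ω : R) ^ cubicExp p x := by
  rw [cubicExp, dif_neg hx]
  have h := cubicChar_coe p ω hω (Units.mk0 x hx)
  rw [Units.val_mk0] at h
  rw [h, Units.val_pow_eq_pow_val]

/-- The Jacobi sum polynomial: an integer polynomial `P` with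
`J(χ_ω, χ_ω) = P(ω)` for every `ω`. -/
def cubicJPoly : ℤ[X] :=
  ∑ x ∈ (univ \ {0, 1} : Finset (ZMod p)), (X : ℤ[X]) ^ (cubicExp p x + cubicExp p (1 - x))

lemma jacobiSum_cubicChar (ω : Rˣ) (hω : ω ^ (p - 1) = 1) :
    jacobiSum (cubicChar p ω hω) (cubicChar p ω hω) = aeval (ω : R) (cubicJPoly p) := by
  rw [jacobiSum_eq_sum_sdiff, cubicJPoly, map_sum]
  refine Finset.sum_congr rfl fun x hx => ?_
  simp only [mem_sdiff, mem_univ, mem_insert, mem_singleton, true_and, not_or] at hx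
  have hx0 : x ≠ 0 := hx.1
  have hx1 : (1 : ZMod p) - x ≠ 0 := sub_ne_zero_of_ne (Ne.symm hx.2)
  rw [cubicChar_apply p ω hω hx0, cubicChar_apply p ω hω hx1]
  simp [pow_add]

lemma cubicChar_inv (ω : Rˣ) (hω : ω ^ (p - 1) = 1) :
    (cubicChar p ω hω)⁻¹ = cubicChar p ω⁻¹ (by rw [inv_pow, hω, inv_one]) := by
  apply MulChar.ext
  intro u
  rw [MulChar.inv_apply_eq_inv, cubicChar_coe, cubicChar_coe, inv_pow,
    Ring.inverse_unit]

lemma cubicChar_pow_three (ω : Rˣ) (hω : ω ^ (p - 1) = 1) (hω3 : ω ^ 3 = 1) :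
    (cubicChar p ω hω) ^ 3 = 1 := by
  apply MulChar.ext
  intro u
  rw [MulChar.pow_apply_coe, MulChar.one_apply_coe, cubicChar_coe]
  rw [← Units.val_pow_eq_pow_val, ← pow_mul, mul_comm, pow_mul, hω3, one_pow, Units.val_one]

lemma cubicChar_ne_one (ω : Rˣ) (hω : ω ^ (p - 1) = 1) (hω1 : (ω : R) ≠ 1) :
    cubicChar p ω hω ≠ 1 := by
  intro h
  have hg : cubicChar p ω hω ((cubicGen p : (ZMod p)ˣ) : ZMod p) = 1 := by
    rw [h, MulChar.one_apply_coe]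
  rw [cubicChar_coe] at hg
  have hd : cubicGen p ^ cubicDlog p (cubicGen p) = cubicGen p ^ 1 := by
    rw [cubicDlog_spec, pow_one]
  rw [pow_eq_pow_iff_modEq, orderOf_cubicGen] at hd
  have : (ω : R) ^ cubicDlog p (cubicGen p) = (ω : R) ^ 1 := by
    have := cubic_pow_dlog_congr p ω hω hd
    exact_mod_cast congrArg (Units.val) this
  rw [Units.val_pow_eq_pow_val, this, pow_one] at hg
  exact hω1 hg

end CubicResAux

/-- If p ≡ 1 (mod 3) is prime, 4p = L² + 27M², and q ∉ {2,3,p} is a prime dividing M,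
then q is a cubic residue modulo p. -/
theorem cubic_residue_of_dvd_M (p : ℕ) (hp : p.Prime) (hp3 : p % 3 = 1)
    (L M : ℤ) (hLM : 4 * (p : ℤ) = L ^ 2 + 27 * M ^ 2)
    (q : ℕ) (hq : q.Prime) (hq2 : q ≠ 2) (hq3 : q ≠ 3) (hqp : q ≠ p)
    (hdvd : (q : ℤ) ∣ M) :
    ∃ x : ℤ, x ^ 3 ≡ (q : ℤ) [ZMOD (p : ℤ)] := by
  haveI : Fact p.Prime := ⟨hp⟩
  haveI : Fact q.Prime := ⟨hq⟩
  have hp2 : 2 ≤ p := hp.two_le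
  have hp4 : p ≠ 4 := by intro h; rw [h] at hp; norm_num at hp
  have hp7 : 7 ≤ p := by omega
  obtain ⟨p3, hp3'⟩ : 3 ∣ p - 1 := by omega
  -- ### Part 1 : the complex side, extracting integers a b with `p = a² - ab + b²`, `3 ∣ b`
  obtain ⟨ω₀, hω₀root⟩ := IsAlgClosed.exists_root (X ^ 2 + X + 1 : ℂ[X])
    (by rw [show (X ^ 2 + X + 1 : ℂ[X]).degree = 2 by compute_degree!]; norm_num)
  have hω₀sq : ω₀ ^ 2 + ω₀ + 1 = 0 := by simpa [Polynomial.IsRoot] using hω₀root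
  have h3C : (3 : ℂ) ≠ 0 := by norm_num
  have hω₀1 : ω₀ ≠ 1 := quad_root_ne_one hω₀sq h3C
  have hω₀0 : ω₀ ≠ 0 := quad_root_ne_zero hω₀sq
  set ωu₀ : ℂˣ := quadRootUnit hω₀sq with hωu₀def
  have hωu₀3 : ωu₀ ^ 3 = 1 := quadRootUnit_pow_three hω₀sq
  have hωu₀p : ωu₀ ^ (p - 1) = 1 := by rw [hp3', pow_mul, hωu₀3, one_pow]
  set χ₀ : MulChar (ZMod p) ℂ := cubicChar p ωu₀ hωu₀p with hχ₀def
  have hχ₀3 : χ₀ ^ 3 = 1 := cubicChar_pow_three p ωu₀ hωu₀p hωu₀3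
  have hχ₀ne : χ₀ ≠ 1 := cubicChar_ne_one p ωu₀ hωu₀p hω₀1
  have hχ₀sq : χ₀ * χ₀ ≠ 1 := by
    intro h
    apply hχ₀ne
    have h1 : χ₀ ^ 3 = χ₀ := by rw [pow_succ, pow_two, h, one_mul]
    rw [hχ₀3] at h1
    exact h1.symm
  set a : ℤ := (cubicJPoly p %ₘ (X ^ 2 + X + 1)).coeff 0 with ha_def
  set b : ℤ := (cubicJPoly p %ₘ (X ^ 2 + X + 1)).coeff 1 with hb_def
  have hJ₀ : jacobiSum χ₀ χ₀ = (a : ℂ) + (b : ℂ) * ω₀ := by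
    rw [hχ₀def, jacobiSum_cubicChar p ωu₀ hωu₀p, quadRootUnit_val]
    exact aeval_eq_of_quad_root _ hω₀sq
  -- `3 ∣ b`
  have h3b : 3 ∣ b := by
    obtain ⟨z, hz, hJz⟩ := exists_jacobiSum_eq_neg_one_add (by norm_num : (2:ℕ) < 3)
      hχ₀3 hχ₀3 (by rw [ZMod.card]; exact ⟨p3, hp3'⟩) (quad_root_isPrimitiveRoot hω₀sq h3C)
    rw [Algebra.adjoin_singleton_eq_range_aeval] at hz
    obtain ⟨Pz, hPz⟩ := hz
    set z₀ : ℤ := (Pz %ₘ (X ^ 2 + X + 1)).coeff 0 with hz₀def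
    set z₁ : ℤ := (Pz %ₘ (X ^ 2 + X + 1)).coeff 1 with hz₁def
    have hz' : z = (z₀ : ℂ) + (z₁ : ℂ) * ω₀ := by
      rw [← hPz]; exact aeval_eq_of_quad_root _ hω₀sq
    rw [hz'] at hJz
    have hJab : (a : ℂ) + (b : ℂ) * ω₀ = -1 + ((z₀ : ℂ) + (z₁ : ℂ) * ω₀) * (ω₀ - 1) ^ 2 :=
      hJ₀.symm.trans hJz
    have hcomb : ((3 * z₁ - 1 : ℤ) : ℂ) + ((3 * z₁ - 3 * z₀ : ℤ) : ℂ) * ω₀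
        = (a : ℂ) + (b : ℂ) * ω₀ := by
      push_cast
      linear_combination -hJab - ((z₀ : ℂ) + z₁ * (ω₀ - 3)) * hω₀sq
    obtain ⟨-, hb⟩ := complex_omega_indep' hω₀sq hcomb
    exact ⟨z₁ - z₀, by omega⟩
  -- the norm identity `p = a² - ab + b²`
  have hω₀inv : (ω₀⁻¹) ^ 2 + ω₀⁻¹ + 1 = 0 := by
    field_simp
    linear_combination hω₀sq
  have hJ₀inv : jacobiSum χ₀⁻¹ χ₀⁻¹ = (a : ℂ) + (b : ℂ) * ω₀⁻¹ := by
    rw [hχ₀def, cubicChar_inv p ωu₀ hωu₀p, jacobiSum_cubicChar p _ _]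
    rw [show ((ωu₀⁻¹ : ℂˣ) : ℂ) = ω₀⁻¹ by rw [← quadRootUnit_val hω₀sq, ← hωu₀def, Units.val_inv_eq_inv_val]]
    exact aeval_eq_of_quad_root _ hω₀inv
  have hJprod : ((a : ℂ) + (b : ℂ) * ω₀) * ((a : ℂ) + (b : ℂ) * ω₀⁻¹) = (p : ℂ) := by
    rw [← hJ₀, ← hJ₀inv, jacobiSum_mul_jacobiSum_inv ?hchar hχ₀ne hχ₀ne hχ₀sq, ZMod.card]
    case hchar =>
      rw [ringChar.eq_zero, ZMod.ringChar_zmod_n]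
      exact Ne.symm hp.ne_zero
  have hww : ω₀ * ω₀⁻¹ = 1 := mul_inv_cancel₀ hω₀0
  have hw1 : ω₀ + 1 + ω₀⁻¹ = 0 := by
    field_simp
    linear_combination hω₀sq
  have hZnorm : (p : ℤ) = a ^ 2 - a * b + b ^ 2 := by
    have hint : ((p : ℤ) : ℂ) = ((a ^ 2 - a * b + b ^ 2 : ℤ) : ℂ) := by
      push_cast
      linear_combination -hJprod + ((a : ℂ) * b) * hw1 + ((b : ℂ) ^ 2) * hww
    exact_mod_cast hint
  obtain ⟨c, hc⟩ := h3b
  have h4p' : 4 * (p : ℤ) = (2 * a - b) ^ 2 + 27 * c ^ 2 := by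
    linear_combination 4 * hZnorm + 3 * (b + 3 * c) * hc
  have hM2 : M ^ 2 = c ^ 2 :=
    cubic_repr_unique (p : ℤ) L M (2 * a - b) c (Nat.prime_iff_prime_int.mp hp) hLM h4p'
  have hqZ : Prime (q : ℤ) := Nat.prime_iff_prime_int.mp hq
  have hqc : (q : ℤ) ∣ c := by
    apply hqZ.dvd_of_dvd_pow (n := 2)
    rw [← hM2]
    exact Dvd.dvd.pow hdvd (by norm_num)
  have hqb : (q : ℤ) ∣ b := by rw [hc]; exact Dvd.dvd.mul_left hqc 3
  have hqa : ¬ (q : ℤ) ∣ a := by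
    intro h
    have hqp' : (q : ℤ) ∣ (p : ℤ) := by
      rw [hZnorm]
      exact dvd_add (dvd_sub (dvd_pow h two_ne_zero) (h.mul_right b)) (dvd_pow hqb two_ne_zero)
    rw [Int.natCast_dvd_natCast] at hqp'
    exact hqp ((Nat.prime_dvd_prime_iff_eq hq hp).mp hqp')
  -- ### Part 2 : the characteristic-q side
  clear hJ₀ hχ₀3 hχ₀ne hχ₀sq hχ₀def hJprod hww hw1 hω₀inv
  set F := AlgebraicClosure (ZMod q) with hFdef
  haveI : CharP F q := charP_of_injective_algebraMap (algebraMap (ZMod q) F).injective q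
  have h3F : (3 : F) ≠ 0 := by
    intro h
    have h3 : (q : ℕ) ∣ 3 := (CharP.cast_eq_zero_iff F q 3).mp (by exact_mod_cast h)
    exact hq3 ((Nat.prime_dvd_prime_iff_eq hq (by norm_num)).mp h3)
  have hpF : ((p : ℕ) : F) ≠ 0 := by
    intro h
    have hdp : (q : ℕ) ∣ p := (CharP.cast_eq_zero_iff F q p).mp h
    exact hqp ((Nat.prime_dvd_prime_iff_eq hq hp).mp hdp)
  obtain ⟨ω₁, hω₁root⟩ := IsAlgClosed.exists_root (X ^ 2 + X + 1 : F[X])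
    (by rw [show (X ^ 2 + X + 1 : F[X]).degree = 2 by compute_degree!]; norm_num)
  have hω₁sq : ω₁ ^ 2 + ω₁ + 1 = 0 := by simpa [Polynomial.IsRoot] using hω₁root
  have hω₁1 : ω₁ ≠ 1 := quad_root_ne_one hω₁sq h3F
  set ωu₁ : Fˣ := quadRootUnit hω₁sq with hωu₁def
  have hωu₁3 : ωu₁ ^ 3 = 1 := quadRootUnit_pow_three hω₁sq
  have hωu₁p : ωu₁ ^ (p - 1) = 1 := by rw [hp3', pow_mul, hωu₁3, one_pow]
  set χ : MulChar (ZMod p) F := cubicChar p ωu₁ hωu₁p with hχdef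
  have hχ3 : χ ^ 3 = 1 := cubicChar_pow_three p ωu₁ hωu₁p hωu₁3
  have hχne : χ ≠ 1 := cubicChar_ne_one p ωu₁ hωu₁p hω₁1
  have hχsq : χ * χ ≠ 1 := by
    intro h
    apply hχne
    have h1 : χ ^ 3 = χ := by rw [pow_succ, pow_two, h, one_mul]
    rw [hχ3] at h1
    exact h1.symm
  -- a primitive additive character
  haveI : NeZero p := ⟨hp.ne_zero⟩
  haveI : NeZero ((p : ℕ) : F) := ⟨hpF⟩
  obtain ⟨ζ, hζroot⟩ := IsAlgClosed.exists_root (Polynomial.cyclotomic p F)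
    (Polynomial.degree_cyclotomic_pos p F hp.pos).ne'
  have hζ : IsPrimitiveRoot ζ p := Polynomial.isRoot_cyclotomic_iff.mp hζroot
  set ψ : AddChar (ZMod p) F := AddChar.zmodChar p hζ.pow_eq_one with hψdef
  have hψ : ψ.IsPrimitive := AddChar.zmodChar_primitive_of_primitive_root p hζ
  set g : F := gaussSum χ ψ with hgdef
  have hgg : g * gaussSum χ⁻¹ ψ⁻¹ = ((p : ℕ) : F) := by
    rw [hgdef, gaussSum_mul_gaussSum_eq_card hχne hψ, ZMod.card]
  have hg0 : g ≠ 0 := by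
    intro h
    rw [h, zero_mul] at hgg
    exact hpF hgg.symm
  -- χ(-1) = 1
  have hχm1 : χ (-1 : ZMod p) = 1 := by
    have hxm2 : χ (-1 : ZMod p) * χ (-1 : ZMod p) = 1 := by
      rw [← map_mul, show ((-1 : ZMod p) * -1) = 1 by ring, map_one]
    have hxm3 : χ (-1 : ZMod p) ^ 3 = 1 := by
      rw [← MulChar.pow_apply' χ (by norm_num) (-1 : ZMod p), hχ3,
        MulChar.one_apply (isUnit_one.neg)]
    rw [show (3:ℕ) = 2 + 1 from rfl, pow_succ, pow_two, hxm2, one_mul] at hxm3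
    exact hxm3
  have hsym : gaussSum χ⁻¹ ψ = gaussSum χ⁻¹ ψ⁻¹ := by
    have h := mul_gaussSum_inv_eq_gaussSum χ⁻¹ ψ
    rw [MulChar.inv_apply_eq_inv, hχm1, Ring.inverse_one, one_mul] at h
    exact h.symm
  have hgp : g * gaussSum χ⁻¹ ψ = ((p : ℕ) : F) := by rw [hsym]; exact hgg
  have hχχ : χ * χ = χ⁻¹ := by
    have h1 : (χ * χ) * χ = 1 := by rw [← pow_two, ← pow_succ]; exact hχ3
    exact eq_inv_of_mul_eq_one_left h1
  have hbF : ((b : ℤ) : F) = 0 := by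
    obtain ⟨b', hb'⟩ := hqb
    rw [hb']
    push_cast
    exact (CharP.intCast_eq_zero_iff F q _).mpr (dvd_mul_right _ _)
  have hJa : jacobiSum χ χ = ((a : ℤ) : F) := by
    have h1 : jacobiSum χ χ = ((a : ℤ) : F) + ((b : ℤ) : F) * ω₁ := by
      rw [hχdef, jacobiSum_cubicChar p ωu₁ hωu₁p, quadRootUnit_val]
      exact aeval_eq_of_quad_root _ hω₁sq
    rw [h1, hbF, zero_mul, add_zero]
  have hpa : ((p : ℕ) : F) = ((a : ℤ) : F) ^ 2 := by
    have h1 : (((p : ℕ) : ℤ) : F)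
        = ((a : ℤ) : F) ^ 2 - ((a : ℤ) : F) * ((b : ℤ) : F) + ((b : ℤ) : F) ^ 2 := by
      have hm : ((a * b : ℤ) : F) = ((a : ℤ) : F) * ((b : ℤ) : F) := (Int.castRingHom F).map_mul a b
      rw [← hm]
      simpa only [Int.cast_add, Int.cast_sub, Int.cast_mul, Int.cast_pow] using congrArg (fun z : ℤ => (z : F)) hZnorm
    rw [hbF] at h1
    have h2 : (((p : ℕ) : ℤ) : F) = ((p : ℕ) : F) := by push_cast; ring
    rw [← h2, h1]
    ring
  have haF : ((a : ℤ) : F) ≠ 0 := by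
    intro h
    rw [h] at hpa
    exact hpF (by rw [hpa]; ring)
  have hg3 : g ^ 3 = ((a : ℤ) : F) ^ 3 := by
    have h2 := jacobiSum_mul_nontrivial hχsq ψ
    rw [hχχ, hJa] at h2
    have h3 : g ^ 3 = ((a : ℤ) : F) * ((p : ℕ) : F) := by
      calc g ^ 3 = (gaussSum χ⁻¹ ψ * ((a : ℤ) : F)) * g := by rw [h2]; ring
      _ = ((a : ℤ) : F) * (g * gaussSum χ⁻¹ ψ) := by ring
      _ = ((a : ℤ) : F) * ((p : ℕ) : F) := by rw [hgp]
    rw [h3, hpa]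
    ring
  have haq : ((a : ℤ) : F) ^ q = ((a : ℤ) : F) := by
    have h1 : ((a : ℤ) : F) = algebraMap (ZMod q) F ((a : ℤ) : ZMod q) := by
      rw [map_intCast]
    rw [h1, ← map_pow, ZMod.pow_card]
  have hq2' : 2 ≤ q := hq.two_le
  have hqmod : q % 3 = 1 ∨ q % 3 = 2 := by
    have h1 : ¬ (3 ∣ q) := fun h => hq3 ((Nat.prime_dvd_prime_iff_eq (by norm_num) hq).mp h).symm
    omega
  set qu : (ZMod p)ˣ := ZMod.unitOfCoprime q ((Nat.coprime_primes hq hp).mpr hqp) with hqudef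
  have hqu : ((qu : (ZMod p)ˣ) : ZMod p) = ((q : ℕ) : ZMod p) := ZMod.coe_unitOfCoprime q _
  have hfrob : g ^ q = gaussSum (χ ^ q) (AddChar.mulShift ψ ((q : ℕ) : ZMod p)) := by
    rw [hgdef, gaussSum_frob q χ ψ, AddChar.pow_mulShift]
  -- the key claim: χ(q) = 1
  have hχq1 : χ (((q : ℕ) : ZMod p)) = 1 := by
    rcases hqmod with hcase | hcase
    · -- q ≡ 1 (mod 3)
      have hχq : χ ^ q = χ := by
        have h0 := congrArg (fun n : ℕ => χ ^ n) (show q = 3 * (q / 3) + 1 by omega)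
        replace h0 : χ ^ q = χ ^ (3 * (q / 3) + 1) := h0
        rw [pow_add, pow_mul, hχ3, one_pow, one_mul, pow_one] at h0
        exact h0
      have haq1 : ((a : ℤ) : F) ^ (q - 1) = 1 := by
        have h2 : ((a : ℤ) : F) ^ (q - 1) * ((a : ℤ) : F) = 1 * ((a : ℤ) : F) := by
          rw [← pow_succ, show q - 1 + 1 = q by omega, haq, one_mul]
        exact mul_right_cancel₀ haF h2
      have hgq : g ^ q = g := by
        calc g ^ q = (g ^ 3) ^ ((q - 1) / 3) * g := by
              rw [← pow_mul, ← pow_succ, show 3 * ((q - 1) / 3) + 1 = q by omega]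
        _ = (((a : ℤ) : F) ^ 3) ^ ((q - 1) / 3) * g := by rw [hg3]
        _ = ((a : ℤ) : F) ^ (q - 1) * g := by
              rw [← pow_mul, show 3 * ((q - 1) / 3) = q - 1 by omega]
        _ = g := by rw [haq1, one_mul]
      have hshift := gaussSum_mulShift χ ψ qu
      rw [hqu] at hshift
      rw [hχq] at hfrob
      have hfin : χ (((q : ℕ) : ZMod p)) * g = 1 * g := by
        rw [one_mul]
        conv_lhs => rw [← hgq, hfrob]
        rw [hshift]
      exact mul_right_cancel₀ hg0 hfin
    · -- q ≡ 2 (mod 3)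
      have hχq : χ ^ q = χ⁻¹ := by
        have h0 := congrArg (fun n : ℕ => χ ^ n) (show q = 3 * (q / 3) + 2 by omega)
        replace h0 : χ ^ q = χ ^ (3 * (q / 3) + 2) := h0
        rw [pow_add, pow_mul, hχ3, one_pow, one_mul, pow_two, hχχ] at h0
        exact h0
      have hgq1 : g ^ (q + 1) = ((p : ℕ) : F) := by
        calc g ^ (q + 1) = (g ^ 3) ^ ((q + 1) / 3) := by
              rw [← pow_mul, show 3 * ((q + 1) / 3) = q + 1 by omega]
        _ = (((a : ℤ) : F) ^ 3) ^ ((q + 1) / 3) := by rw [hg3]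
        _ = ((a : ℤ) : F) ^ (q + 1) := by
              rw [← pow_mul, show 3 * ((q + 1) / 3) = q + 1 by omega]
        _ = ((a : ℤ) : F) ^ q * ((a : ℤ) : F) := by rw [pow_succ]
        _ = ((p : ℕ) : F) := by rw [haq, ← pow_two, ← hpa]
      have hshift := gaussSum_mulShift χ⁻¹ ψ qu
      rw [hqu] at hshift
      rw [hχq] at hfrob
      have hSg : gaussSum χ⁻¹ (AddChar.mulShift ψ ((q : ℕ) : ZMod p)) * g = ((p : ℕ) : F) := by
        rw [← hfrob, ← pow_succ]
        exact hgq1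
      have hkey : χ⁻¹ (((q : ℕ) : ZMod p)) * ((p : ℕ) : F) = 1 * ((p : ℕ) : F) := by
        rw [one_mul]
        conv_lhs => rw [← hSg, ← mul_assoc, hshift]
        rw [mul_comm]
        exact hgp
      have hinv1 : χ⁻¹ (((q : ℕ) : ZMod p)) = 1 := mul_right_cancel₀ hpF hkey
      have hmul : χ (((q : ℕ) : ZMod p)) * χ⁻¹ (((q : ℕ) : ZMod p)) = 1 := by
        rw [← MulChar.mul_apply, mul_inv_cancel]
        exact MulChar.one_apply (by rw [← hqu]; exact Units.isUnit qu)
      rw [hinv1, mul_one] at hmul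
      exact hmul
  -- ### Part 3 : extract the cube root
  have hωd : ωu₁ ^ cubicDlog p qu = 1 := by
    have h1 := cubicChar_coe p ωu₁ hωu₁p qu
    rw [hqu, ← hχdef] at h1
    rw [h1] at hχq1
    exact Units.val_eq_one.mp hχq1
  haveI : Fact (Nat.Prime 3) := ⟨by norm_num⟩
  have hωu₁1 : ωu₁ ≠ 1 := by
    intro h
    exact hω₁1 (by rw [← quadRootUnit_val hω₁sq, ← hωu₁def, h, Units.val_one])
  have horder : orderOf ωu₁ = 3 := orderOf_eq_prime hωu₁3 hωu₁1
  have h3d : 3 ∣ cubicDlog p qu := by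
    rw [← horder]
    exact orderOf_dvd_of_pow_eq_one hωd
  obtain ⟨m, hm⟩ := h3d
  have hcube : (cubicGen p ^ m) ^ 3 = qu := by
    rw [← pow_mul, mul_comm, ← hm, cubicDlog_spec]
  refine ⟨((((cubicGen p ^ m : (ZMod p)ˣ) : ZMod p).val : ℤ)), ?_⟩
  rw [← ZMod.intCast_eq_intCast_iff]
  have hy : (((((cubicGen p : (ZMod p)ˣ) : ZMod p) ^ m).val : ℕ) : ZMod p)
      = (((cubicGen p : (ZMod p)ˣ) : ZMod p) ^ m) := by
    rw [ZMod.natCast_val, ZMod.cast_id]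
  have hv := congrArg (Units.val) hcube
  simp only [Units.val_pow_eq_pow_val] at hv
  push_cast
  rw [hy, hv, hqu]
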